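/- Assume P is infinite and P \ Pa is finite for every a ∈ P. Let ρ be a right injective action of P on a second-countable compact Hausdorff space X (each ρ_a continuous injective, ρ_e = id, ρ_a ∘ ρ_b = ρ_{ba}) with ρ_a(X) open in X for every a ∈ P. Suppose: (i) there exists a unique point x_∞ ∈ X with Q_{x_∞} = G; and (ii) there exists x₀ ∈ X such that the map a ∈ P ↦ ρ_a(x₀) is injective and has dense range in X. Then the map Λ : P_∞ → X defined by Λ(a) = ρ_a(x₀) for a ∈ P and Λ(∞) = x_∞ is a homeomorphism satisfying ρ_a ∘ Λ = Λ ∘ σ_a for every a ∈ P; in particular, ρ_a(x_∞) = x_∞ for all a ∈ P, and the actions P ↷_σ P_∞ and P ↷_ρ X are conjugate. -/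
import Mathlib


/-- `Q_x`: the set of `g ∈ G` expressible as `a * b⁻¹` with `a, b ∈ P` such that
`ρ_a x = ρ_b y` for some `y ∈ X`. -/
def Qset {G X : Type*} [Group G] (P : Set G) (ρ : G → X → X) (x : X) : Set G :=
  {g : G | ∃ a ∈ P, ∃ b ∈ P, ∃ y : X, g = a * b⁻¹ ∧ ρ a x = ρ b y}

/-- assume `P` is infinite and `P \ Pa` is finite for every `a ∈ P`. Let
`ρ` be a right injective action of `P` on a second-countable compact Hausdorff space `X`
with open image sets, admitting (i) a unique point `x_∞` with `Q_{x_∞} = G`, and (ii) a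
point `x₀` such that `a ↦ ρ_a(x₀)` is injective on `P` with dense range. Then
`Λ : P_∞ → X`, `Λ(a) = ρ_a(x₀)`, `Λ(∞) = x_∞`, is a homeomorphism from the one-point
compactification `P_∞ = P ∪ {∞}` of `P` onto `X` intertwining the action
`σ_a(b) = ba`, `σ_a(∞) = ∞` with `ρ`; in particular `ρ_a(x_∞) = x_∞` for all `a ∈ P`,
and `P ↷_σ P_∞` and `P ↷_ρ X` are conjugate. -/
theorem stmt_18 {G : Type*} [Group G] [Countable G]
    [TopologicalSpace G] [DiscreteTopology G]
    (P : Set G) (hP1 : (1 : G) ∈ P) (hPmul : ∀ a ∈ P, ∀ b ∈ P, a * b ∈ P)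
    (hPG : ∀ g : G, ∃ a ∈ P, ∃ b ∈ P, g = a * b⁻¹)
    (hPinf : P.Infinite)
    (hfin : ∀ a ∈ P, (P \ ((· * a) '' P)).Finite)
    {X : Type*} [TopologicalSpace X] [CompactSpace X] [T2Space X]
    [SecondCountableTopology X]
    (ρ : G → X → X)
    (hρc : ∀ a ∈ P, Continuous (ρ a))
    (hρi : ∀ a ∈ P, Function.Injective (ρ a))
    (hρ1 : ρ 1 = id)
    (hρm : ∀ a ∈ P, ∀ b ∈ P, ∀ x : X, ρ a (ρ b x) = ρ (b * a) x)
    (hρopen : ∀ a ∈ P, IsOpen (Set.range (ρ a)))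
    (xinf : X) (hxinf : Qset P ρ xinf = Set.univ)
    (huniq : ∀ x : X, Qset P ρ x = Set.univ → x = xinf)
    (x₀ : X) (hinj : Set.InjOn (fun a : G => ρ a x₀) P)
    (hdense : Dense ((fun a : G => ρ a x₀) '' P)) :
    ∃ Λ : OnePoint ↥P ≃ₜ X,
      (∀ b : ↥P, Λ (OnePoint.some b) = ρ b.1 x₀) ∧
      (Λ OnePoint.infty = xinf) ∧
      (∀ a ∈ P, ρ a xinf = xinf) ∧
      (∀ (a : G) (ha : a ∈ P) (b : ↥P),
        ρ a (Λ (OnePoint.some b)) =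
          Λ (OnePoint.some (⟨b.1 * a, hPmul b.1 b.2 a ha⟩ : ↥P))) ∧
      (∀ a ∈ P, ρ a (Λ OnePoint.infty) = Λ OnePoint.infty) := by
  classical
  -- common elements of right translates
  have hPaPb : ∀ a ∈ P, ∀ b ∈ P, ∃ p ∈ P, ∃ q ∈ P, p * a = q * b := by
    intro a ha b hb
    have hinf2 : (P \ ((P \ ((· * a) '' P)) ∪ (P \ ((· * b) '' P)))).Infinite :=
      hPinf.diff ((hfin a ha).union (hfin b hb))
    obtain ⟨x, hxP, hx2⟩ := hinf2.nonempty
    simp only [Set.mem_union, not_or, Set.mem_diff, not_and, not_not] at hx2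
    obtain ⟨q, hq, hqa⟩ := hx2.1 hxP
    obtain ⟨p, hp, hpb⟩ := hx2.2 hxP
    exact ⟨q, hq, p, hp, by simp only at hqa hpb; rw [hqa, hpb]⟩
  have rangeLem : ∀ c ∈ P, ∀ d ∈ P, ∀ z : X, ρ (d * c) z ∈ Set.range (ρ c) :=
    fun c hc d hd z => ⟨ρ d z, hρm c hc d hd z⟩
  -- Q_x = univ ↔ x ∈ range ρ_c for all c ∈ P
  have kerA_fwd : ∀ x : X, Qset P ρ x = Set.univ → ∀ c ∈ P, x ∈ Set.range (ρ c) := by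
    intro x hx c hc
    have : c⁻¹ ∈ Qset P ρ x := hx ▸ Set.mem_univ _
    obtain ⟨a, ha, b, hb, y, hg, heq⟩ := this
    have hbca : b = c * a := by
      have : a⁻¹ * c⁻¹ = b⁻¹ := by rw [hg]; group
      calc b = (a⁻¹ * c⁻¹)⁻¹ := by rw [this]; group
        _ = c * a := by group
    refine ⟨y, hρi a ha ?_⟩
    rw [hρm a ha c hc y, ← hbca, heq]
  have kerA_bwd : ∀ x : X, (∀ c ∈ P, x ∈ Set.range (ρ c)) → Qset P ρ x = Set.univ := by
    intro x hx
    apply Set.eq_univ_of_forall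
    intro g
    obtain ⟨a, ha, b, hb, hg⟩ := hPG g
    obtain ⟨p, hp, q, hq, hpq⟩ := hPaPb a ha b hb
    obtain ⟨z, hz⟩ := hx p hp
    refine ⟨a, ha, b, hb, ρ q z, hg, ?_⟩
    rw [← hz, hρm a ha p hp z, hpq, ← hρm b hb q hq z]
  have hxinfK : ∀ c ∈ P, xinf ∈ Set.range (ρ c) := kerA_fwd xinf hxinf
  have hKsub : ∀ x : X, (∀ c ∈ P, x ∈ Set.range (ρ c)) → x = xinf :=
    fun x h => huniq x (kerA_bwd x h)
  -- x_∞ is fixed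
  have hfix : ∀ a ∈ P, ρ a xinf = xinf := by
    intro a ha
    apply hKsub
    intro c hc
    obtain ⟨p, hp, q, hq, hpq⟩ := hPaPb c hc a ha
    obtain ⟨z, hz⟩ := hxinfK q hq
    rw [← hz, hρm a ha q hq z, ← hpq]
    exact rangeLem c hc p hp z
  -- Λ on points of P never hits x_∞
  have hne : ∀ c ∈ P, ρ c x₀ ≠ xinf := by
    intro c hc h
    obtain ⟨a, haP, ha1⟩ : ∃ a ∈ P, a ≠ 1 := by
      obtain ⟨a, ha⟩ := (hPinf.diff (Set.finite_singleton 1)).nonempty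
      exact ⟨a, ha.1, by simpa using ha.2⟩
    have h2 : ρ (c * a) x₀ = ρ c x₀ := by
      rw [← hρm a haP c hc x₀, h, hfix a haP]
    have := hinj (hPmul c hc a haP) hc h2
    exact ha1 (by
      have : c * a = c * 1 := by simpa using this
      exact mul_left_cancel this)
  -- definition of the map
  set Λ₀ : OnePoint ↥P → X := fun p => Option.elim p xinf (fun b => ρ b.1 x₀) with hΛ₀
  have hΛsome : ∀ b : ↥P, Λ₀ (OnePoint.some b) = ρ b.1 x₀ := fun b => rfl
  have hΛinf : Λ₀ OnePoint.infty = xinf := rfl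
  -- key compactness: any open neighborhood of x_∞ contains some range ρ_c
  have hexc : ∀ U : Set X, IsOpen U → xinf ∈ U → ∃ c ∈ P, Set.range (ρ c) ⊆ U := by
    intro U hU hxU
    by_contra hcon
    push_neg at hcon
    haveI : Nonempty ↥P := ⟨⟨1, hP1⟩⟩
    set F : ↥P → Set X := fun c => Set.range (ρ c.1) ∩ Uᶜ with hF
    have hclosed : ∀ c : ↥P, IsClosed (F c) :=
      fun c => ((isCompact_range (hρc c.1 c.2)).isClosed).inter (isClosed_compl_iff.2 hU)
    have hcpt : ∀ c : ↥P, IsCompact (F c) := fun c => (hclosed c).isCompact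
    have hnon : ∀ c : ↥P, (F c).Nonempty := by
      intro c
      obtain ⟨x, hx1, hx2⟩ := Set.not_subset.1 (hcon c.1 c.2)
      exact ⟨x, hx1, hx2⟩
    have hdir : Directed (· ⊇ ·) F := by
      intro c₁ c₂
      obtain ⟨p, hp, q, hq, hpq⟩ := hPaPb c₁.1 c₁.2 c₂.1 c₂.2
      refine ⟨⟨p * c₁.1, hPmul p hp c₁.1 c₁.2⟩, ?_, ?_⟩
      · intro x hx
        obtain ⟨⟨z, hz⟩, hxU'⟩ := hx
        exact ⟨hz ▸ rangeLem c₁.1 c₁.2 p hp z, hxU'⟩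
      · intro x hx
        obtain ⟨⟨z, hz⟩, hxU'⟩ := hx
        refine ⟨?_, hxU'⟩
        have hmem : ρ (q * c₂.1) z ∈ Set.range (ρ c₂.1) := rangeLem c₂.1 c₂.2 q hq z
        rw [← hpq] at hmem
        rwa [hz] at hmem
    obtain ⟨x, hx⟩ :=
      IsCompact.nonempty_iInter_of_directed_nonempty_isCompact_isClosed F hdir hnon hcpt hclosed
    have hxK : ∀ c ∈ P, x ∈ Set.range (ρ c) := by
      intro c hc
      exact (Set.mem_iInter.1 hx ⟨c, hc⟩).1
    have hxU' : x ∈ Uᶜ := (Set.mem_iInter.1 hx ⟨1, hP1⟩).2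
    exact hxU' (hKsub x hxK ▸ hxU)
  -- continuity
  have htend : Filter.Tendsto (fun b : ↥P => ρ b.1 x₀) Filter.cofinite (nhds xinf) := by
    intro s hs
    obtain ⟨U, hUs, hU, hxU⟩ := mem_nhds_iff.1 hs
    obtain ⟨c, hc, hcU⟩ := hexc U hU hxU
    rw [Filter.mem_map, Filter.mem_cofinite]
    have hsub : ((fun b : ↥P => ρ b.1 x₀) ⁻¹' s)ᶜ ⊆ Subtype.val ⁻¹' (P \ ((· * c) '' P)) := by
      intro b hb
      simp only [Set.mem_compl_iff, Set.mem_preimage] at hb ⊢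
      refine ⟨b.2, fun hbim => ?_⟩
      obtain ⟨d, hd, hdc⟩ := hbim
      apply hb
      apply hUs
      apply hcU
      simp only at hdc
      rw [← hdc]
      exact rangeLem c hc d hd x₀
    exact (((hfin c hc).preimage (Subtype.val_injective.injOn)).subset hsub)
  have hcont : Continuous Λ₀ := by
    rw [OnePoint.continuous_iff_from_discrete]
    exact htend
  -- injectivity
  have hinj0 : Function.Injective Λ₀ := by
    intro p q hpq
    match p, q with
    | Option.none, Option.none => rfl
    | Option.none, Option.some b => exact absurd (hpq.symm) (hne b.1 b.2)
    | Option.some b, Option.none => exact absurd hpq (hne b.1 b.2)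
    | Option.some b, Option.some b' => exact congrArg Option.some (Subtype.ext (hinj b.2 b'.2 hpq))
  -- surjectivity
  have hsurj : Function.Surjective Λ₀ := by
    have hclosed : IsClosed (Set.range Λ₀) := (isCompact_range hcont).isClosed
    have hsub : ((fun a : G => ρ a x₀) '' P) ⊆ Set.range Λ₀ := by
      rintro _ ⟨a, ha, rfl⟩
      exact ⟨OnePoint.some ⟨a, ha⟩, rfl⟩
    have : Dense (Set.range Λ₀) := hdense.mono hsub
    intro x
    have : x ∈ Set.range Λ₀ := by
      rw [← hclosed.closure_eq]
      exact this x
    exact this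
  -- assemble
  let e : OnePoint ↥P ≃ X := Equiv.ofBijective Λ₀ ⟨hinj0, hsurj⟩
  have hce : Continuous e := hcont
  refine ⟨hce.homeoOfEquivCompactToT2, fun b => rfl, rfl, hfix, ?_, ?_⟩
  · intro a ha b
    show ρ a (ρ b.1 x₀) = ρ (b.1 * a) x₀
    exact hρm a ha b.1 b.2 x₀
  · intro a ha
    show ρ a xinf = xinf
    exact hfix a ha
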